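/- Let λ ∈ ℝ ∖ {0}, let a, b, c ∈ ℝ, and let f(x) = a + b·e^{λx} + c·e^{−λx}. For j ∈ ℤ set v_j := (f(j), f'(j), f''(j)) ∈ ℝ³, and let H₀ := [[−1, −sinh(λ)/λ, (1−cosh(λ))/λ²], [0, −cosh(λ), −sinh(λ)/λ], [0, −λ·sinh(λ), −cosh(λ)]]. Then v_{j+1} + H₀ v_j = 0 for all j ∈ ℤ; that is, the convolution operator with symbol H*_{0,{λ}}(z) = z^{−1}I + H₀ annihilates the Hermite sample sequences of every function in the span of {1, e^{λx}, e^{−λx}}. -/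

import Mathlib

open Matrix

lemma aux_hasDerivAt (lam a b c : ℝ) (x : ℝ) :
    HasDerivAt (fun x => a + b * Real.exp (lam * x) + c * Real.exp (-lam * x))
      (b * lam * Real.exp (lam * x) + c * (-lam) * Real.exp (-lam * x)) x := by
  have h1 : HasDerivAt (fun x : ℝ => Real.exp (lam * x)) (lam * Real.exp (lam * x)) x := by
    simpa [mul_comm] using ((hasDerivAt_id x).const_mul lam).exp
  have h2 : HasDerivAt (fun x : ℝ => Real.exp (-lam * x)) (-lam * Real.exp (-lam * x)) x := by
    simpa [mul_comm] using ((hasDerivAt_id x).const_mul (-lam)).exp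
  have := ((hasDerivAt_const x a).add (h1.const_mul b)).add (h2.const_mul c)
  exact this.congr_deriv (by ring)

/-- The convolution operator with symbol `H*_{0,{λ}}(z) = z⁻¹ I + H₀` annihilates the
Hermite sample sequences `(f(j), f'(j), f''(j))` of every `f` in the span of
`{1, e^{λx}, e^{−λx}}`: `v_{j+1} + H₀ v_j = 0` for all integers `j`. -/
theorem stmt9 (lam : ℝ) (hlam : lam ≠ 0) (a b c : ℝ) (f : ℝ → ℝ)
    (hf : ∀ x : ℝ, f x = a + b * Real.exp (lam * x) + c * Real.exp (-lam * x))
    (v : ℤ → Fin 3 → ℝ)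
    (hv : ∀ j : ℤ, v j = ![f (j : ℝ), deriv f (j : ℝ), iteratedDeriv 2 f (j : ℝ)])
    (H0 : Matrix (Fin 3) (Fin 3) ℝ)
    (hH0 : H0 = !![-1, -Real.sinh lam / lam, (1 - Real.cosh lam) / lam^2;
                   0, -Real.cosh lam, -Real.sinh lam / lam;
                   0, -lam * Real.sinh lam, -Real.cosh lam]) :
    ∀ j : ℤ, v (j+1) + H0.mulVec (v j) = 0 := by
  have hfe : f = fun x => a + b * Real.exp (lam * x) + c * Real.exp (-lam * x) :=
    funext hf
  subst hfe
  have hd1 : deriv (fun x => a + b * Real.exp (lam * x) + c * Real.exp (-lam * x))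
      = fun x => b * lam * Real.exp (lam * x) + c * (-lam) * Real.exp (-lam * x) := by
    funext x
    exact (aux_hasDerivAt lam a b c x).deriv
  have hd2 : iteratedDeriv 2 (fun x => a + b * Real.exp (lam * x) + c * Real.exp (-lam * x))
      = fun x => b * lam * lam * Real.exp (lam * x) + c * lam * lam * Real.exp (-lam * x) := by
    rw [iteratedDeriv_succ, iteratedDeriv_one, hd1]
    funext x
    have := (aux_hasDerivAt lam 0 (b * lam) (c * (-lam)) x)
    simp only [zero_add] at this
    rw [this.deriv]
    ring
  intro j
  funext i
  have hexp : Real.exp (lam * ((j : ℝ) + 1)) = Real.exp (lam * j) * Real.exp lam := by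
    rw [← Real.exp_add]; ring_nf
  have hexp' : Real.exp (-lam * ((j : ℝ) + 1)) = Real.exp (-lam * j) * Real.exp (-lam) := by
    rw [← Real.exp_add]; ring_nf
  have hcosh := Real.cosh_eq lam
  have hsinh := Real.sinh_eq lam
  have hne : Real.exp lam ≠ 0 := Real.exp_ne_zero lam
  have hexpneg : Real.exp (-lam) = (Real.exp lam)⁻¹ := Real.exp_neg lam
  fin_cases i <;>
    simp only [hv, hH0, hd1, hd2, Matrix.mulVec, dotProduct, Fin.sum_univ_three,
      Int.cast_add, Int.cast_one, Pi.add_apply, Pi.zero_apply, Matrix.cons_val_zero,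
      Matrix.cons_val_one, Matrix.head_cons, Matrix.cons_val', Matrix.empty_val',
      Matrix.cons_val_fin_one, Matrix.head_fin_const, Matrix.cons_val_two, Matrix.tail_cons,
      hexp, hexp', hcosh, hsinh, hexpneg, Fin.reduceFinMk, Fin.isValue, Matrix.of_apply] <;>
    field_simp <;>
    ring
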